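/- Let θ : (0,∞) → [0,∞) be measurable, d > 0, and assume 𝔍_θ(1) < ∞ and 𝔏^d_θ(1) < ∞. Then for every r > 0 one has r^d ∫_r^∞ 𝔍_θ(t)/t^{d+1} dt = (1/d)·(𝔍_θ(r) + 𝔏^d_θ(r)), where 𝔍_θ(r) = ∫_0^r θ(t)/t dt and 𝔏^d_θ(r) = r^d ∫_r^∞ θ(t)/t^{d+1} dt. -/

import Mathlib

open MeasureTheory Set
open scoped ENNReal


lemma dini_kernel (d : ℝ) (hd : 0 < d) {s : ℝ} (hs : 0 < s) :
    ∫⁻ t in Ioi s, ENNReal.ofReal (1 / t ^ (d + 1)) = ENNReal.ofReal (1 / (d * s ^ d)) := by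
  have hcong : ∀ t ∈ Ioi s, ENNReal.ofReal (1 / t ^ (d + 1)) = ENNReal.ofReal (t ^ (-(d + 1))) := by
    intro t ht
    rw [Real.rpow_neg (hs.trans ht).le, one_div]
  rw [setLIntegral_congr_fun_ae measurableSet_Ioi (ae_of_all _ hcong),
    ← ofReal_integral_eq_lintegral_ofReal (integrableOn_Ioi_rpow_of_lt (by linarith) hs)
      ((ae_restrict_iff' measurableSet_Ioi).2 (ae_of_all _ fun t ht =>
        Real.rpow_nonneg (hs.trans ht).le _)),
    integral_Ioi_rpow_of_lt (by linarith) hs]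
  congr 1
  have h1 : -(d + 1) + 1 = -d := by ring
  rw [h1, Real.rpow_neg hs.le]
  have h2 : (s : ℝ) ^ d ≠ 0 := (Real.rpow_pos_of_pos hs d).ne'
  field_simp


-- finiteness of the large-scale lintegral on Ioi r
lemma dini_Gfin (θ : ℝ → ℝ) (hmeas : Measurable θ)
    (hnn : ∀ t : ℝ, 0 < t → 0 ≤ θ t) (d : ℝ) (hd : 0 < d)
    (hJ : IntegrableOn (fun t => θ t / t) (Ioc (0 : ℝ) 1))
    (hL : IntegrableOn (fun s => θ s / s ^ (d + 1)) (Ioi (1 : ℝ)))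
    {r : ℝ} (hr : 0 < r) :
    ∫⁻ s in Ioi r, ENNReal.ofReal (θ s / s ^ (d + 1)) < ⊤ := by
  have h1 : ∫⁻ s in Ioi (1:ℝ), ENNReal.ofReal (θ s / s ^ (d + 1)) < ⊤ := by
    refine lt_of_le_of_lt (lintegral_mono fun s => ?_) hL.hasFiniteIntegral
    rw [Real.enorm_eq_ofReal_abs]
    exact ENNReal.ofReal_le_ofReal (le_abs_self _)
  rcases le_or_gt 1 r with h | h
  · exact lt_of_le_of_lt (lintegral_mono_set (Ioi_subset_Ioi h)) h1
  · have hsplit : Ioi r = Ioc r 1 ∪ Ioi (1:ℝ) := (Ioc_union_Ioi_eq_Ioi h.le).symm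
    rw [hsplit, lintegral_union measurableSet_Ioi Ioc_disjoint_Ioi_same]
    refine ENNReal.add_lt_top.2 ⟨?_, h1⟩
    have hb : ∀ s ∈ Ioc r 1, ENNReal.ofReal (θ s / s ^ (d + 1)) ≤
        ENNReal.ofReal (r ^ (-d)) * ENNReal.ofReal (θ s / s) := by
      intro s hs
      have hs0 : 0 < s := hr.trans hs.1
      rw [← ENNReal.ofReal_mul (Real.rpow_nonneg hr.le _)]
      apply ENNReal.ofReal_le_ofReal
      have : θ s / s ^ (d + 1) = s ^ (-d) * (θ s / s) := by
        rw [Real.rpow_add hs0, Real.rpow_one, Real.rpow_neg hs0.le]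
        field_simp
      rw [this]
      apply mul_le_mul_of_nonneg_right _ (div_nonneg (hnn s hs0) hs0.le)
      rw [Real.rpow_neg hs0.le, Real.rpow_neg hr.le]
      exact inv_anti₀ (Real.rpow_pos_of_pos hr _)
        (Real.rpow_le_rpow hr.le hs.1.le hd.le)
    calc ∫⁻ s in Ioc r 1, ENNReal.ofReal (θ s / s ^ (d + 1))
        ≤ ∫⁻ s in Ioc r 1, ENNReal.ofReal (r ^ (-d)) * ENNReal.ofReal (θ s / s) :=
          setLIntegral_mono' measurableSet_Ioc hb
      _ = ENNReal.ofReal (r ^ (-d)) * ∫⁻ s in Ioc r 1, ENNReal.ofReal (θ s / s) :=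
          lintegral_const_mul _ (ENNReal.measurable_ofReal.comp (hmeas.div measurable_id))
      _ < ⊤ := by
          refine ENNReal.mul_lt_top ENNReal.ofReal_lt_top ?_
          refine lt_of_le_of_lt (lintegral_mono_set (fun s hs =>
            ⟨hr.trans hs.1, hs.2⟩ : Ioc r 1 ⊆ Ioc 0 1)) ?_
          refine lt_of_le_of_lt (lintegral_mono fun s => ?_) hJ.hasFiniteIntegral
          rw [Real.enorm_eq_ofReal_abs]
          exact ENNReal.ofReal_le_ofReal (le_abs_self _)


lemma dini_Jfin (θ : ℝ → ℝ) (hmeas : Measurable θ)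
    (hnn : ∀ t : ℝ, 0 < t → 0 ≤ θ t) (d : ℝ) (hd : 0 < d)
    (hJ : IntegrableOn (fun t => θ t / t) (Ioc (0 : ℝ) 1))
    (hL : IntegrableOn (fun s => θ s / s ^ (d + 1)) (Ioi (1 : ℝ)))
    (t : ℝ) :
    ∫⁻ s in Ioc 0 t, ENNReal.ofReal (θ s / s) < ⊤ := by
  have h1 : ∫⁻ s in Ioc (0:ℝ) 1, ENNReal.ofReal (θ s / s) < ⊤ := by
    refine lt_of_le_of_lt (lintegral_mono fun s => ?_) hJ.hasFiniteIntegral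
    rw [Real.enorm_eq_ofReal_abs]
    exact ENNReal.ofReal_le_ofReal (le_abs_self _)
  rcases le_or_gt t 1 with h | h
  · exact lt_of_le_of_lt (lintegral_mono_set (Ioc_subset_Ioc_right h)) h1
  · have hsplit : Ioc (0:ℝ) t = Ioc 0 1 ∪ Ioc 1 t := (Ioc_union_Ioc_eq_Ioc zero_le_one h.le).symm
    rw [hsplit, lintegral_union measurableSet_Ioc (Ioc_disjoint_Ioc_of_le le_rfl)]
    refine ENNReal.add_lt_top.2 ⟨h1, ?_⟩
    have hGfin : ∫⁻ s in Ioi (1:ℝ), ENNReal.ofReal (θ s / s ^ (d + 1)) < ⊤ := by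
      refine lt_of_le_of_lt (lintegral_mono fun s => ?_) hL.hasFiniteIntegral
      rw [Real.enorm_eq_ofReal_abs]
      exact ENNReal.ofReal_le_ofReal (le_abs_self _)
    have hb : ∀ s ∈ Ioc (1:ℝ) t, ENNReal.ofReal (θ s / s) ≤
        ENNReal.ofReal (t ^ d) * ENNReal.ofReal (θ s / s ^ (d + 1)) := by
      intro s hs
      have hs0 : (0:ℝ) < s := lt_trans one_pos hs.1
      rw [← ENNReal.ofReal_mul (Real.rpow_nonneg (zero_le_one.trans h.le) _)]
      apply ENNReal.ofReal_le_ofReal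
      have hse : θ s / s = s ^ d * (θ s / s ^ (d + 1)) := by
        rw [Real.rpow_add hs0, Real.rpow_one]
        have h2 : (s:ℝ) ^ d ≠ 0 := (Real.rpow_pos_of_pos hs0 d).ne'
        field_simp
      rw [hse]
      exact mul_le_mul_of_nonneg_right
        (Real.rpow_le_rpow hs0.le hs.2 hd.le)
        (div_nonneg (hnn s hs0) (Real.rpow_pos_of_pos hs0 _).le)
    calc ∫⁻ s in Ioc 1 t, ENNReal.ofReal (θ s / s)
        ≤ ∫⁻ s in Ioc 1 t, ENNReal.ofReal (t ^ d) * ENNReal.ofReal (θ s / s ^ (d + 1)) :=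
          setLIntegral_mono' measurableSet_Ioc hb
      _ = ENNReal.ofReal (t ^ d) * ∫⁻ s in Ioc 1 t, ENNReal.ofReal (θ s / s ^ (d + 1)) :=
          lintegral_const_mul _ (ENNReal.measurable_ofReal.comp
            (hmeas.div (measurable_id.pow_const _)))
      _ < ⊤ := by
          refine ENNReal.mul_lt_top ENNReal.ofReal_lt_top ?_
          exact lt_of_le_of_lt (lintegral_mono_set (fun s hs => hs.1 : Ioc 1 t ⊆ Ioi 1)) hGfin


theorem large_scale_dini_of_dini (θ : ℝ → ℝ) (hmeas : Measurable θ)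
    (hnn : ∀ t : ℝ, 0 < t → 0 ≤ θ t) (d : ℝ) (hd : 0 < d)
    (hJ : IntegrableOn (fun t => θ t / t) (Ioc (0 : ℝ) 1))
    (hL : IntegrableOn (fun s => θ s / s ^ (d + 1)) (Ioi (1 : ℝ))) :
    ∀ r : ℝ, 0 < r →
      r ^ d * ∫ t in Ioi r, (∫ s in Ioc (0 : ℝ) t, θ s / s) / t ^ (d + 1) =
        (1 / d) * ((∫ t in Ioc (0 : ℝ) r, θ t / t) +
          r ^ d * ∫ t in Ioi r, θ t / t ^ (d + 1)) := by
  intro r hr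
  -- abbreviations
  set f : ℝ → ℝ≥0∞ := fun s => ENNReal.ofReal (θ s / s) with hf
  set g : ℝ → ℝ≥0∞ := fun s => ENNReal.ofReal (θ s / s ^ (d + 1)) with hg
  set k : ℝ → ℝ≥0∞ := fun t => ENNReal.ofReal (1 / t ^ (d + 1)) with hk
  have hfmeas : Measurable f := ENNReal.measurable_ofReal.comp (hmeas.div measurable_id)
  have hgmeas : Measurable g :=
    ENNReal.measurable_ofReal.comp (hmeas.div (measurable_id.pow_const _))
  have hkmeas : Measurable k :=
    ENNReal.measurable_ofReal.comp (measurable_const.div (measurable_id.pow_const _))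
  have hJfin : ∀ t : ℝ, ∫⁻ s in Ioc 0 t, f s < ⊤ := fun t =>
    dini_Jfin θ hmeas hnn d hd hJ hL t
  have hGfin : ∫⁻ s in Ioi r, g s < ⊤ := dini_Gfin θ hmeas hnn d hd hJ hL hr
  -- integrability of θ s / s on Ioc 0 t
  have hintJ : ∀ t : ℝ, IntegrableOn (fun s => θ s / s) (Ioc (0:ℝ) t) := by
    intro t
    refine ⟨(hmeas.div measurable_id).aestronglyMeasurable, ?_⟩
    rw [hasFiniteIntegral_def]
    calc ∫⁻ s in Ioc 0 t, (‖θ s / s‖₊ : ℝ≥0∞)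
        = ∫⁻ s in Ioc 0 t, f s := by
          refine setLIntegral_congr_fun_ae measurableSet_Ioc (ae_of_all _ fun s hs => ?_)
          rw [hf, ← enorm_eq_nnnorm, Real.enorm_eq_ofReal (div_nonneg (hnn s hs.1) hs.1.le)]
      _ < ⊤ := hJfin t
  -- F = the small-scale Dini integral, and its lintegral description
  set F : ℝ → ℝ := fun t => ∫ s in Ioc 0 t, θ s / s with hF
  have hFrepr : ∀ t : ℝ, F t = (∫⁻ s in Ioc 0 t, f s).toReal := by
    intro t
    simp only [hF]
    rw [integral_eq_lintegral_of_nonneg_ae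
      ((ae_restrict_iff' measurableSet_Ioc).2 (ae_of_all _ fun s hs =>
        div_nonneg (hnn s hs.1) hs.1.le))
      (hmeas.div measurable_id).aestronglyMeasurable]
  have hFnn : ∀ t : ℝ, 0 ≤ F t := fun t => by
    rw [hFrepr t]; exact ENNReal.toReal_nonneg
  have hFmono : Monotone F := by
    intro a b hab
    exact setIntegral_mono_set (hintJ b)
      ((ae_restrict_iff' measurableSet_Ioc).2 (ae_of_all _ fun s hs =>
        div_nonneg (hnn s hs.1) hs.1.le))
      (HasSubset.Subset.eventuallyLE (Ioc_subset_Ioc_right hab))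
  have hFmeas : Measurable F := hFmono.measurable
  -- the right-hand integral as a lintegral
  have hRrepr : (∫ t in Ioi r, θ t / t ^ (d + 1)) = (∫⁻ s in Ioi r, g s).toReal := by
    rw [integral_eq_lintegral_of_nonneg_ae
      ((ae_restrict_iff' measurableSet_Ioi).2 (ae_of_all _ fun s hs =>
        div_nonneg (hnn s (hr.trans hs)) (Real.rpow_pos_of_pos (hr.trans hs) _).le))
      (hmeas.div (measurable_id.pow_const _)).aestronglyMeasurable]
  -- the left-hand integral as a lintegral
  have hLrepr : (∫ t in Ioi r, F t / t ^ (d + 1))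
      = (∫⁻ t in Ioi r, ENNReal.ofReal (F t / t ^ (d + 1))).toReal := by
    rw [integral_eq_lintegral_of_nonneg_ae
      ((ae_restrict_iff' measurableSet_Ioi).2 (ae_of_all _ fun t ht =>
        div_nonneg (hFnn t) (Real.rpow_pos_of_pos (hr.trans ht) _).le))
      (hFmeas.div (measurable_id.pow_const _)).aestronglyMeasurable]
  -- main lintegral computation
  have key : ∫⁻ t in Ioi r, ENNReal.ofReal (F t / t ^ (d + 1))
      = (∫⁻ s in Ioc 0 r, f s) * ENNReal.ofReal (1 / (d * r ^ d))
        + ENNReal.ofReal (1 / d) * ∫⁻ s in Ioi r, g s := by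
    have step1 : ∀ t ∈ Ioi r, ENNReal.ofReal (F t / t ^ (d + 1))
        = (∫⁻ s in Ioc 0 r, f s) * k t + (∫⁻ s in Ioc r t, f s) * k t := by
      intro t ht
      have ht0 : 0 < t := hr.trans ht
      have h1 : ENNReal.ofReal (F t / t ^ (d + 1)) = ENNReal.ofReal (F t) * k t := by
        rw [div_eq_mul_one_div, ENNReal.ofReal_mul (hFnn t)]
      have h2 : ENNReal.ofReal (F t) = ∫⁻ s in Ioc 0 t, f s := by
        rw [hFrepr t, ENNReal.ofReal_toReal (hJfin t).ne]
      have h3 : (∫⁻ s in Ioc 0 t, f s)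
          = (∫⁻ s in Ioc 0 r, f s) + ∫⁻ s in Ioc r t, f s := by
        rw [← lintegral_union measurableSet_Ioc (Ioc_disjoint_Ioc_of_le le_rfl),
          Ioc_union_Ioc_eq_Ioc hr.le (le_of_lt ht)]
      rw [h1, h2, h3, add_mul]
    rw [setLIntegral_congr_fun_ae measurableSet_Ioi (ae_of_all _ step1)]
    rw [lintegral_add_left (hkmeas.const_mul _)]
    congr 1
    · rw [lintegral_const_mul _ hkmeas, dini_kernel d hd hr]
    -- the double-integral (Fubini) part
    · have inner_eq : ∀ t ∈ Ioi r, (∫⁻ s in Ioc r t, f s) * k t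
          = ∫⁻ s in Ioi r, (Iic t).indicator (fun s => f s * k t) s := by
        intro t _
        rw [← lintegral_mul_const _ hfmeas, lintegral_indicator measurableSet_Iic,
          Measure.restrict_restrict measurableSet_Iic, Set.Iic_inter_Ioi]
      rw [setLIntegral_congr_fun_ae measurableSet_Ioi (ae_of_all _ inner_eq)]
      have hswap : (∫⁻ t in Ioi r, ∫⁻ s in Ioi r,
            (Iic t).indicator (fun s => f s * k t) s)
          = ∫⁻ s in Ioi r, ∫⁻ t in Ioi r,
            (Iic t).indicator (fun s' => f s' * k t) s := by
        apply lintegral_lintegral_swap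
        have : (Function.uncurry fun t s => (Iic t).indicator (fun s' => f s' * k t) s)
            = {p : ℝ × ℝ | p.2 ≤ p.1}.indicator (fun p => f p.2 * k p.1) := by
          funext p
          simp only [Function.uncurry, Set.indicator, mem_Iic, mem_setOf_eq]
        rw [this]
        exact (Measurable.indicator ((hfmeas.comp measurable_snd).mul
          (hkmeas.comp measurable_fst)) (measurableSet_le measurable_snd measurable_fst)).aemeasurable
      rw [hswap]
      have inner2 : ∀ s ∈ Ioi r, (∫⁻ t in Ioi r,
            (Iic t).indicator (fun s' => f s' * k t) s)
          = ENNReal.ofReal (1 / d) * g s := by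
        intro s hs
        have hs0 : 0 < s := hr.trans hs
        have hmem : ∀ t : ℝ, (Iic t).indicator (fun s' => f s' * k t) s
            = (Ici s).indicator (fun t' => f s * k t') t := by
          intro t
          simp only [Set.indicator, mem_Iic, mem_Ici]
        simp_rw [hmem]
        rw [lintegral_indicator measurableSet_Ici,
          Measure.restrict_restrict measurableSet_Ici,
          (inter_eq_left.2 (Ici_subset_Ioi.2 hs) : Ici s ∩ Ioi r = Ici s),
          setLIntegral_congr (Ioi_ae_eq_Ici (a := s)).symm,
          lintegral_const_mul _ hkmeas, dini_kernel d hd hs0]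
        rw [hf, hg, ← ENNReal.ofReal_mul (div_nonneg (hnn s hs0) hs0.le),
          ← ENNReal.ofReal_mul (by positivity)]
        congr 1
        have hsd : s ^ (d + 1) = s ^ d * s := by
          rw [Real.rpow_add hs0, Real.rpow_one]
        rw [hsd]
        rw [div_mul_div_comm, div_mul_div_comm, mul_one, one_mul]
        congr 1
        ring
      rw [setLIntegral_congr_fun_ae measurableSet_Ioi (ae_of_all _ inner2),
        lintegral_const_mul _ hgmeas]
  -- put everything together
  rw [hLrepr, hRrepr, key, ENNReal.toReal_add
      (ENNReal.mul_ne_top (hJfin r).ne ENNReal.ofReal_ne_top)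
      (ENNReal.mul_ne_top ENNReal.ofReal_ne_top hGfin.ne),
    ENNReal.toReal_mul, ENNReal.toReal_mul, ← hFrepr r,
    ENNReal.toReal_ofReal (by positivity), ENNReal.toReal_ofReal (by positivity)]
  have h1 : r ^ d ≠ 0 := (Real.rpow_pos_of_pos hr d).ne'
  have h2 : d ≠ 0 := hd.ne'
  field_simp
  ring
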